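/- Let M, K_d, U > 0 and let θ, θ̇ : ℝ → ℝ be twice/once differentiable functions satisfying M·θ̈(t) = -K_d·θ̇(t) - K_p·θ(t) + U·sin(θ(t) + θ₀(t)) with K_p > 0. Define V₁(t) = (1/2)·M·θ̇(t)² + (1/2)·K_p·θ(t)². Then V₁'(t) = -K_d·θ̇(t)² + U·sin(θ(t)+θ₀(t))·θ̇(t), and whenever |θ̇(t)| > U/K_d, V₁'(t) < 0. -/
import Mathlib


open Real

theorem lyapunov_V1_deriv (M K_d K_p U : ℝ) (hM : M > 0) (hKd : K_d > 0) (hU : U > 0)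
    (hKp : K_p > 0)
    (θ θ' θ'' θ₀ : ℝ → ℝ)
    (hθ : ∀ t, HasDerivAt θ (θ' t) t)
    (hθ' : ∀ t, HasDerivAt θ' (θ'' t) t)
    (hdyn : ∀ t, M * θ'' t = -K_d * θ' t - K_p * θ t + U * Real.sin (θ t + θ₀ t)) :
    ∀ t, HasDerivAt (fun s => (1/2) * M * (θ' s) ^ 2 + (1/2) * K_p * (θ s) ^ 2)
        (-K_d * (θ' t) ^ 2 + U * Real.sin (θ t + θ₀ t) * θ' t) t ∧
      (|θ' t| > U / K_d →
        -K_d * (θ' t) ^ 2 + U * Real.sin (θ t + θ₀ t) * θ' t < 0) := by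
  intro t
  constructor
  · have h1 : HasDerivAt (fun s => (1/2) * M * (θ' s) ^ 2 + (1/2) * K_p * (θ s) ^ 2)
        ((1/2) * M * (2 * θ' t ^ 1 * θ'' t) + (1/2) * K_p * (2 * θ t ^ 1 * θ' t)) t := by
      exact (((hθ' t).pow 2).const_mul ((1/2)*M)).add (((hθ t).pow 2).const_mul ((1/2)*K_p))
    convert h1 using 1
    linear_combination -(θ' t) * hdyn t
  · intro h
    have h2 : K_d * |θ' t| > U := by
      rw [gt_iff_lt, div_lt_iff₀ hKd] at h
      linarith [h]
    have h3 : U * Real.sin (θ t + θ₀ t) * θ' t ≤ U * |θ' t| := by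
      calc U * Real.sin (θ t + θ₀ t) * θ' t ≤ |U * Real.sin (θ t + θ₀ t) * θ' t| := le_abs_self _
        _ = U * |Real.sin (θ t + θ₀ t)| * |θ' t| := by
            rw [abs_mul, abs_mul, abs_of_pos hU]
        _ ≤ U * 1 * |θ' t| :=
            mul_le_mul_of_nonneg_right
              (mul_le_mul_of_nonneg_left (abs_sin_le_one _) hU.le) (abs_nonneg _)
        _ = U * |θ' t| := by ring
    have h4 : K_d * (θ' t)^2 = K_d * |θ' t| * |θ' t| := by
      rw [← sq_abs]; ring
    have h5 : |θ' t| > 0 := lt_trans (div_pos hU hKd) h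
    nlinarith [h2, h3, h5]
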